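/- Let φ₁, …, φ_N ∈ ℝ^d with ‖φᵢ‖ ≤ 1, λ ≥ 1, and define Λᵢ = λI + ∑_{t<i} φₜφₜᵀ. Then ∑_{i=1}^N ‖φᵢ‖²_{Λᵢ⁻¹} ≤ 2d·log(1 + N/(dλ)), where ‖φ‖²_M = φᵀMφ. -/

import Mathlib

open Matrix Finset

section EllipticalAux

lemma psd_vmv {d : ℕ} (v : Fin d → ℝ) : (vecMulVec v v).PosSemidef := by
  have hmv : ∀ x : Fin d → ℝ, vecMulVec v v *ᵥ x = (v ⬝ᵥ x) • v := by
    intro x; ext i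
    simp [vecMulVec_apply, mulVec, dotProduct, Finset.mul_sum, mul_comm, mul_assoc, mul_left_comm]
  refine posSemidef_iff_dotProduct_mulVec.mpr ⟨?_, ?_⟩
  · ext i j; simp [conjTranspose_apply, vecMulVec_apply, mul_comm]
  · intro x
    rw [hmv x]
    simp only [star_trivial, dotProduct_smul]
    rw [dotProduct_comm]
    exact mul_self_nonneg _

lemma psd_sum {d : ℕ} {ι : Type*} (s : Finset ι) (f : ι → Fin d → ℝ) :
    (∑ t ∈ s, vecMulVec (f t) (f t)).PosSemidef := by
  induction s using Finset.cons_induction with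
  | empty => simpa using (Matrix.PosSemidef.zero (n := Fin d) (R := ℝ))
  | cons a s ha ih => rw [Finset.sum_cons]; exact (psd_vmv _).add ih

lemma pd_smul_one {d : ℕ} {lam : ℝ} (hlam : 0 < lam) :
    (lam • (1 : Matrix (Fin d) (Fin d) ℝ)).PosDef := by
  rw [smul_one_eq_diagonal]
  exact Matrix.PosDef.diagonal (fun i => hlam)

lemma det_fin_one_any {α : Type*} [CommRing α] (inst : DecidableEq (Fin 1))
    (A : Matrix (Fin 1) (Fin 1) α) : @Matrix.det _ inst _ _ _ A = A 0 0 := by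
  rw [Subsingleton.elim inst (instDecidableEqFin 1)]
  exact Matrix.det_fin_one A

lemma det_add_outer {d : ℕ} {M : Matrix (Fin d) (Fin d) ℝ} (hM : M.PosDef) (u : Fin d → ℝ) :
    (M + vecMulVec u u).det = M.det * (1 + u ⬝ᵥ M⁻¹ *ᵥ u) := by
  rw [vecMulVec_eq (Fin 1), Matrix.det_add_replicateCol_mul_replicateRow hM.det_pos.ne'.isUnit u u]
  erw [det_fin_one_any]
  simp only [Matrix.add_apply, Matrix.one_apply_eq, Matrix.mul_apply, Matrix.replicateRow_apply,
    Matrix.replicateCol_apply, dotProduct, mulVec, Finset.sum_mul, Finset.mul_sum]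
  rw [Finset.sum_comm]
  exact congrArg (fun z => M.det * (1 + z))
    (Finset.sum_congr rfl fun i _ => Finset.sum_congr rfl fun j _ => by ring)

lemma le_two_log {x : ℝ} (h0 : 0 ≤ x) (h1 : x ≤ 1) : x ≤ 2 * Real.log (1 + x) := by
  have hx : (0:ℝ) < 1 + x := by linarith
  have hexp : Real.exp (x / 2) ≤ 1 + x := by
    have h3 : (1 - x/2) * Real.exp (x/2) ≤ 1 := by
      have : Real.exp (-(x/2)) * Real.exp (x/2) = 1 := by
        rw [← Real.exp_add]; simp
      nlinarith [Real.add_one_le_exp (-(x/2)), Real.exp_pos (x/2)]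
    nlinarith [Real.exp_pos (x/2)]
  have := (Real.le_log_iff_exp_le hx).mpr hexp
  linarith

lemma trace_eq_sum_eig {d : ℕ} {M : Matrix (Fin d) (Fin d) ℝ} (hM : M.IsHermitian) :
    M.trace = ∑ i, hM.eigenvalues i := by
  conv_lhs => rw [hM.spectral_theorem, Unitary.conjStarAlgAut_apply]
  rw [Matrix.trace_mul_cycle]
  rw [show (star (hM.eigenvectorUnitary : Matrix (Fin d) (Fin d) ℝ)) *
      (hM.eigenvectorUnitary : Matrix (Fin d) (Fin d) ℝ) = 1 from
    Unitary.coe_star_mul_self _, Matrix.one_mul, Matrix.trace_diagonal]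
  simp

lemma det_le_pow_trace' {d : ℕ} (hd : 0 < d) {M : Matrix (Fin d) (Fin d) ℝ} (hM : M.PosDef) :
    M.det ≤ (M.trace / d) ^ d := by
  have hdd : (d:ℝ) ≠ 0 := Nat.cast_ne_zero.mpr hd.ne'
  set μ := hM.isHermitian.eigenvalues with hμ
  have hμ0 : ∀ i, 0 ≤ μ i := fun i => (hM.eigenvalues_pos i).le
  have hdet : M.det = ∏ i, μ i := by
    rw [hM.isHermitian.det_eq_prod_eigenvalues]; simp [hμ]
  have amgm := Real.geom_mean_le_arith_mean_weighted Finset.univ (fun _ => 1/(d:ℝ)) μ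
    (fun i _ => by positivity) (by simp [hdd]) (fun i _ => hμ0 i)
  have hg : (∏ i, μ i ^ (1/(d:ℝ))) ^ d = ∏ i, μ i := by
    rw [← Finset.prod_pow]
    refine Finset.prod_congr rfl fun i _ => ?_
    rw [← Real.rpow_natCast (μ i ^ (1/(d:ℝ))) d, ← Real.rpow_mul (hμ0 i),
      one_div_mul_cancel hdd, Real.rpow_one]
  have hsum : ∑ i, (1/(d:ℝ)) * μ i = M.trace / d := by
    rw [trace_eq_sum_eig hM.isHermitian, Finset.sum_div]
    exact Finset.sum_congr rfl fun i _ => by rw [one_div, inv_mul_eq_div]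
  calc M.det = (∏ i, μ i ^ (1/(d:ℝ))) ^ d := by rw [hg, hdet]
    _ ≤ (∑ i, (1/(d:ℝ)) * μ i) ^ d := by
        apply pow_le_pow_left₀ (Finset.prod_nonneg fun i _ => Real.rpow_nonneg (hμ0 i) _) amgm
    _ = (M.trace / d) ^ d := by rw [hsum]

lemma quad_inv_le_one {d : ℕ} {lam : ℝ} (hlam : 1 ≤ lam)
    {M : Matrix (Fin d) (Fin d) ℝ} (hM : M.PosDef)
    (hlow : ∀ y : Fin d → ℝ, lam * (y ⬝ᵥ y) ≤ y ⬝ᵥ M *ᵥ y)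
    {u : Fin d → ℝ} (hu : ∑ j, u j ^ 2 ≤ 1) :
    u ⬝ᵥ M⁻¹ *ᵥ u ≤ 1 := by
  have hlam0 : (0:ℝ) < lam := lt_of_lt_of_le one_pos hlam
  set y := M⁻¹ *ᵥ u with hy
  set x := u ⬝ᵥ M⁻¹ *ᵥ u with hxdef
  have hx0 : 0 ≤ x := by
    have := hM.inv.posSemidef.dotProduct_mulVec_nonneg u
    simpa [hxdef] using this
  have hMy : M *ᵥ y = u := by
    rw [hy, mulVec_mulVec, Matrix.mul_nonsing_inv _ hM.det_pos.ne'.isUnit, one_mulVec]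
  have hyMy : y ⬝ᵥ M *ᵥ y = x := by
    rw [hMy, dotProduct_comm]
  have hyy : lam * (y ⬝ᵥ y) ≤ x := hyMy ▸ hlow y
  have hy0 : 0 ≤ y ⬝ᵥ y := by
    simp only [dotProduct]
    exact Finset.sum_nonneg fun i _ => mul_self_nonneg _
  have hcs : x ^ 2 ≤ (∑ j, u j ^ 2) * (y ⬝ᵥ y) := by
    have h1 := Finset.sum_mul_sq_le_sq_mul_sq Finset.univ u y
    have h2 : y ⬝ᵥ y = ∑ i, y i ^ 2 := by
      simp [dotProduct, sq]
    rw [h2]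
    exact h1
  nlinarith [sq_nonneg x, mul_le_mul_of_nonneg_left hu hy0]

lemma filter_lt_succ {N : ℕ} (k : ℕ) (hk : k < N) :
    Finset.univ.filter (fun t : Fin N => (t:ℕ) < k+1)
      = insert ⟨k,hk⟩ (Finset.univ.filter (fun t : Fin N => (t:ℕ) < k)) := by
  ext t
  simp [Nat.lt_succ_iff_lt_or_eq, Fin.ext_iff, or_comm]
  exact le_iff_eq_or_lt

end EllipticalAux

/-- Elliptical potential lemma: for vectors `φᵢ ∈ ℝ^d` of Euclidean norm at most 1,
`λ ≥ 1`, and `Λᵢ = λ I + ∑_{t < i} φₜ φₜᵀ`, we have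
`∑ᵢ ‖φᵢ‖²_{Λᵢ⁻¹} ≤ 2 d log (1 + N / (d λ))`. -/
theorem stmt_3 (d N : ℕ) (lam : ℝ) (hlam : 1 ≤ lam)
    (φ : Fin N → Fin d → ℝ) (hφ : ∀ i, ∑ j, (φ i j) ^ 2 ≤ 1)
    (Λ : Fin N → Matrix (Fin d) (Fin d) ℝ)
    (hΛ : ∀ i, Λ i = lam • (1 : Matrix (Fin d) (Fin d) ℝ) +
      ∑ t ∈ Finset.univ.filter (fun t => t < i), vecMulVec (φ t) (φ t)) :
    ∑ i, φ i ⬝ᵥ ((Λ i)⁻¹ *ᵥ φ i) ≤ 2 * d * Real.log (1 + N / (d * lam)) := by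
  have hlam0 : (0:ℝ) < lam := lt_of_lt_of_le one_pos hlam
  rcases Nat.eq_zero_or_pos d with hd0 | hd
  · subst hd0
    have hL : ∑ i, φ i ⬝ᵥ ((Λ i)⁻¹ *ᵥ φ i) = 0 := Finset.sum_eq_zero fun i _ => by
      simp [dotProduct]
    rw [hL]
    norm_num
  have hdd : (d:ℝ) ≠ 0 := Nat.cast_ne_zero.mpr hd.ne'
  set A : ℕ → Matrix (Fin d) (Fin d) ℝ := fun k =>
    lam • 1 + ∑ t ∈ Finset.univ.filter (fun t : Fin N => (t:ℕ) < k),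
      vecMulVec (φ t) (φ t) with hAdef
  have hApsd : ∀ k, (∑ t ∈ Finset.univ.filter (fun t : Fin N => (t:ℕ) < k),
      vecMulVec (φ t) (φ t)).PosSemidef := fun k => psd_sum _ _
  have hApd : ∀ k, (A k).PosDef := fun k => (pd_smul_one hlam0).add_posSemidef (hApsd k)
  have hΛA : ∀ i : Fin N, Λ i = A i := by
    intro i
    have hfc : Finset.univ.filter (fun t : Fin N => t < i)
        = Finset.univ.filter (fun t : Fin N => (t:ℕ) < (i:ℕ)) :=
      Finset.filter_congr fun t _ => Fin.lt_def
    rw [hΛ i, hfc]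
  have hlow : ∀ k (y : Fin d → ℝ), lam * (y ⬝ᵥ y) ≤ y ⬝ᵥ (A k) *ᵥ y := by
    intro k y
    have h1 : y ⬝ᵥ (A k) *ᵥ y
        = lam * (y ⬝ᵥ y) + y ⬝ᵥ (∑ t ∈ Finset.univ.filter (fun t : Fin N => (t:ℕ) < k),
            vecMulVec (φ t) (φ t)) *ᵥ y := by
      simp [hAdef, add_mulVec, dotProduct_add, smul_mulVec, one_mulVec,
        dotProduct_smul, smul_eq_mul]
    have h2 := (hApsd k).dotProduct_mulVec_nonneg y
    simp only [star_trivial] at h2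
    rw [h1]
    linarith
  have hx0 : ∀ i : Fin N, 0 ≤ φ i ⬝ᵥ ((A i)⁻¹ *ᵥ φ i) := by
    intro i
    have := (hApd i).inv.posSemidef.dotProduct_mulVec_nonneg (φ i)
    simpa using this
  have hx1 : ∀ i : Fin N, φ i ⬝ᵥ ((A i)⁻¹ *ᵥ φ i) ≤ 1 :=
    fun i => quad_inv_le_one hlam (hApd i) (hlow i) (hφ i)
  have hsucc : ∀ k (hk : k < N), A (k+1) = A k + vecMulVec (φ ⟨k,hk⟩) (φ ⟨k,hk⟩) := by
    intro k hk
    simp only [hAdef]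
    rw [filter_lt_succ k hk, Finset.sum_insert (by simp)]
    abel
  have hlogdet : ∀ k (hk : k < N), Real.log (A (k+1)).det
      = Real.log (A k).det
        + Real.log (1 + φ ⟨k,hk⟩ ⬝ᵥ ((A k)⁻¹ *ᵥ φ ⟨k,hk⟩)) := by
    intro k hk
    have hxk := hx0 ⟨k,hk⟩
    rw [hsucc k hk, det_add_outer (hApd k),
      Real.log_mul (hApd k).det_pos.ne' (by exact ne_of_gt (by linarith))]
  have tel : ∀ k, k ≤ N → ∑ i ∈ Finset.univ.filter (fun i : Fin N => (i:ℕ) < k),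
      Real.log (1 + φ i ⬝ᵥ ((A i)⁻¹ *ᵥ φ i)) = Real.log (A k).det - Real.log (A 0).det := by
    intro k
    induction k with
    | zero => intro _; simp
    | succ k ih =>
      intro hk
      have hkN : k < N := hk
      rw [filter_lt_succ k hkN, Finset.sum_insert (by simp), ih hkN.le, hlogdet k hkN]
      ring
  have huniv : Finset.univ.filter (fun i : Fin N => (i:ℕ) < N) = Finset.univ :=
    Finset.filter_true_of_mem fun i _ => i.isLt
  have hsum : ∑ i : Fin N, Real.log (1 + φ i ⬝ᵥ ((A i)⁻¹ *ᵥ φ i))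
      = Real.log (A N).det - Real.log (A 0).det := by
    rw [← huniv]; exact tel N le_rfl
  have hA0 : Real.log (A 0).det = d * Real.log lam := by
    have h0 : A 0 = lam • (1 : Matrix (Fin d) (Fin d) ℝ) := by
      simp [hAdef]
    rw [h0, Matrix.det_smul, Matrix.det_one, mul_one, Fintype.card_fin, Real.log_pow]
  have htr : (A N).trace ≤ d * lam + N := by
    have h1 : (A N).trace = lam * d + ∑ t : Fin N, ∑ j, φ t j * φ t j := by
      simp only [hAdef]
      rw [Matrix.trace_add, Matrix.trace_smul, Matrix.trace_one, Matrix.trace_sum, huniv]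
      simp only [smul_eq_mul, Fintype.card_fin]
      refine congrArg (lam * (d:ℝ) + ·) (Finset.sum_congr rfl fun t _ => ?_)
      simp [Matrix.trace, Matrix.diag, vecMulVec_apply]
    rw [h1]
    have h2 : ∑ t : Fin N, ∑ j, φ t j * φ t j ≤ (N:ℝ) := by
      calc ∑ t : Fin N, ∑ j, φ t j * φ t j ≤ ∑ _t : Fin N, (1:ℝ) := by
            refine Finset.sum_le_sum fun t _ => ?_
            have h := hφ t
            calc ∑ j, φ t j * φ t j = ∑ j, φ t j ^ 2 :=
                  Finset.sum_congr rfl fun j _ => (pow_two _).symm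
              _ ≤ 1 := h
        _ = N := by simp
    linarith
  have htr0 : 0 ≤ (A N).trace := by
    have := (hApd N).det_pos
    have h1 : (A N).trace = ∑ i, (hApd N).isHermitian.eigenvalues i :=
      trace_eq_sum_eig _
    rw [h1]
    exact Finset.sum_nonneg fun i _ => ((hApd N).eigenvalues_pos i).le
  have hposb : (0:ℝ) < lam + N / d := by positivity
  have hdetb : (A N).det ≤ (lam + N/d)^d := by
    refine (det_le_pow_trace' hd (hApd N)).trans ?_
    apply pow_le_pow_left₀ (div_nonneg htr0 (Nat.cast_nonneg d))
    rw [div_le_iff₀ (by positivity)]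
    calc (A N).trace ≤ d * lam + N := htr
      _ = (lam + N/d) * d := by field_simp
  have hlogN : Real.log (A N).det ≤ d * Real.log (lam + N/d) := by
    have h1 : Real.log (A N).det ≤ Real.log ((lam + N/d)^d) :=
      Real.log_le_log (hApd N).det_pos hdetb
    rwa [Real.log_pow] at h1
  calc ∑ i, φ i ⬝ᵥ ((Λ i)⁻¹ *ᵥ φ i) = ∑ i, φ i ⬝ᵥ ((A i)⁻¹ *ᵥ φ i) :=
        Finset.sum_congr rfl fun i _ => by rw [hΛA i]
    _ ≤ ∑ i, 2 * Real.log (1 + φ i ⬝ᵥ ((A i)⁻¹ *ᵥ φ i)) :=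
        Finset.sum_le_sum fun i _ => le_two_log (hx0 i) (hx1 i)
    _ = 2 * (Real.log (A N).det - Real.log (A 0).det) := by
        rw [← Finset.mul_sum, hsum]
    _ ≤ 2 * (d * Real.log (lam + N/d) - d * Real.log lam) := by
        rw [hA0]
        linarith
    _ = 2 * d * Real.log (1 + N / (d * lam)) := by
        have h5 : (lam + N/d)/lam = 1 + N/(d*lam) := by
          field_simp
        rw [show (d:ℝ) * Real.log (lam + N/d) - d * Real.log lam
            = d * (Real.log (lam + N/d) - Real.log lam) by ring,
          ← Real.log_div hposb.ne' hlam0.ne', h5]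
        ring
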